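/- Let 3 ≤ k ≤ n be integers and let δ be an angle distance on the Grassmannian Gr(k,n) of k-dimensional subspaces of ℝ^n. Then the maximum cardinality of a set of pairwise equiangular k-subspaces with respect to δ is at most C(M_{n+1} + k − 1, k) − M_n · C(M_n − 1, k − 3) − n · C(M_n, k − 3), where M_s := C(s, 2) = s(s−1)/2. -/

import Mathlib

open Matrix Real

section AuxStmt6

open Finset Equiv



private lemma hN2' (n : ℕ) : 2 * (n + 1).choose 2 = n * (n + 1) := by
  have h := Nat.choose_two_right (n + 1)
  simp only [Nat.add_sub_cancel] at h
  have he : 2 ∣ (n + 1) * n := by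
    have h2 := (Nat.even_mul_succ_self n).two_dvd
    rwa [Nat.mul_comm] at h2
  rw [h, Nat.mul_div_cancel' he]
  ring

private lemma hfac' (n j : ℕ) (h1 : 1 ≤ j) (hjn : j + 1 ≤ n) :
    (n - j) ^ 2 ≤ (j + 1) * ((n + 1).choose 2 - j) := by
  have hN := hN2' n
  set N := (n + 1).choose 2
  have hnN : n ≤ N := by nlinarith
  have hjN : j ≤ N := by omega
  zify [show j ≤ n by omega, hjN]
  nlinarith [sq_nonneg ((n:ℤ) - j)]

-- main descFactorial inequality: descF(n,k)^2 ≤ 2 * k! * descF(N,k), 1 ≤ k ≤ n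
private lemma desc_main' (n : ℕ) : ∀ k, 1 ≤ k → k ≤ n →
    n.descFactorial k ^ 2 ≤ 2 * (Nat.factorial k * ((n + 1).choose 2).descFactorial k) := by
  intro k
  induction k with
  | zero => intro h; omega
  | succ j ih =>
    intro _ hjn
    rcases Nat.eq_or_lt_of_le (show 1 ≤ j + 1 from by omega) with h1 | h1
    · -- j = 0 : base case k = 1
      have hj : j = 0 := by omega
      subst hj
      norm_num [Nat.descFactorial_one, Nat.factorial_one]
      have := hN2' n
      nlinarith [Nat.sub_le n 1]
    · -- j ≥ 1
      have hj1 : 1 ≤ j := by omega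
      have hIH := ih hj1 (by omega)
      rw [Nat.descFactorial_succ, Nat.descFactorial_succ, Nat.factorial_succ]
      have hfac'' := hfac' n j hj1 hjn
      calc ((n - j) * n.descFactorial j) ^ 2
          = (n - j) ^ 2 * n.descFactorial j ^ 2 := by ring
        _ ≤ ((j + 1) * (((n+1).choose 2) - j)) * (2 * (Nat.factorial j * ((n + 1).choose 2).descFactorial j)) :=
            Nat.mul_le_mul hfac'' hIH
        _ = 2 * ((j + 1) * Nat.factorial j * ((((n+1).choose 2) - j) * ((n + 1).choose 2).descFactorial j)) := by ring


-- L2 aux: descF(n,k) ≤ k * descF(N, k-1), for 2 ≤ k ≤ n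
private lemma desc_L2 (n : ℕ) : ∀ k, 2 ≤ k → k ≤ n →
    n.descFactorial k ≤ k * ((n + 1).choose 2).descFactorial (k - 1) := by
  intro k
  induction k with
  | zero => omega
  | succ j ih =>
    intro h2 hjn
    rcases Nat.eq_or_lt_of_le h2 with h1 | h1
    · -- k = 2
      have hj : j = 1 := by omega
      subst hj
      have hN := hN2' n
      norm_num [Nat.descFactorial_succ, Nat.descFactorial_one]
      nlinarith [Nat.sub_le n 1]
    · -- j ≥ 2
      have hj2 : 2 ≤ j := by omega
      have hIH := ih hj2 (by omega)
      have hstep : (n - j) * j ≤ (j + 1) * ((n + 1).choose 2 - (j - 1)) := by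
        have hnN : n ≤ (n + 1).choose 2 := by nlinarith [hN2' n]
        have h1' : n - j ≤ (n + 1).choose 2 - (j - 1) := by omega
        have h2' : j ≤ j + 1 := by omega
        calc (n - j) * j ≤ ((n + 1).choose 2 - (j - 1)) * (j + 1) := Nat.mul_le_mul h1' h2'
          _ = (j + 1) * ((n + 1).choose 2 - (j - 1)) := by ring
      calc n.descFactorial (j + 1) = (n - j) * n.descFactorial j := Nat.descFactorial_succ n j
        _ ≤ (n - j) * (j * ((n + 1).choose 2).descFactorial (j - 1)) := Nat.mul_le_mul_left _ hIH
        _ = ((n - j) * j) * ((n + 1).choose 2).descFactorial (j - 1) := by ring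
        _ ≤ ((j + 1) * ((n + 1).choose 2 - (j - 1))) * ((n + 1).choose 2).descFactorial (j - 1) :=
            Nat.mul_le_mul_right _ hstep
        _ = (j + 1) * (((n + 1).choose 2 - (j - 1)) * ((n + 1).choose 2).descFactorial (j - 1)) := by ring
        _ = (j + 1) * ((n + 1).choose 2).descFactorial (j - 1 + 1) := by
            rw [Nat.descFactorial_succ]
        _ = (j + 1) * ((n + 1).choose 2).descFactorial (j + 1 - 1) := by
            congr 2
            omega


private lemma numeric_bound (n k m : ℕ) (hk : 3 ≤ k) (hkn : k ≤ n)
    (hm : m ≤ (n.choose k + 1).choose 2) :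
    m ≤ ((n + 1).choose 2 + k - 1).choose k
        - n.choose 2 * (n.choose 2 - 1).choose (k - 3)
        - n * (n.choose 2).choose (k - 3) := by
  set N := (n + 1).choose 2 with hNdef
  set q := n.choose k with hqdef
  set s := n.choose 2 with hsdef
  have hfacpos : 0 < Nat.factorial k := Nat.factorial_pos k
  -- step 1 : q^2 ≤ 2 * N.choose k
  have hq2 : q ^ 2 ≤ 2 * N.choose k := by
    have h := desc_main' n k (by omega) hkn
    rw [Nat.descFactorial_eq_factorial_mul_choose, Nat.descFactorial_eq_factorial_mul_choose] at h
    have h' : Nat.factorial k * Nat.factorial k * (q ^ 2)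
        ≤ Nat.factorial k * Nat.factorial k * (2 * N.choose k) := by
      calc Nat.factorial k * Nat.factorial k * q ^ 2 = (Nat.factorial k * q) ^ 2 := by ring
        _ ≤ 2 * (Nat.factorial k * (Nat.factorial k * N.choose k)) := h
        _ = Nat.factorial k * Nat.factorial k * (2 * N.choose k) := by ring
    exact Nat.le_of_mul_le_mul_left h' (by positivity)
  -- step 2 : q ≤ N.choose (k-1)
  have hqL2 : q ≤ N.choose (k - 1) := by
    have h := desc_L2 n k (by omega) hkn
    rw [Nat.descFactorial_eq_factorial_mul_choose, Nat.descFactorial_eq_factorial_mul_choose] at h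
    have hkfac : k * Nat.factorial (k - 1) = Nat.factorial k := by
      have : k - 1 + 1 = k := by omega
      rw [← this, Nat.factorial_succ]
      simp
    have h' : Nat.factorial k * q ≤ Nat.factorial k * N.choose (k - 1) := by
      calc Nat.factorial k * q ≤ k * (Nat.factorial (k - 1) * N.choose (k - 1)) := h
        _ = (k * Nat.factorial (k - 1)) * N.choose (k - 1) := by ring
        _ = Nat.factorial k * N.choose (k - 1) := by rw [hkfac]
    exact Nat.le_of_mul_le_mul_left h' hfacpos
  -- step 3 : (q+1).choose 2 ≤ (N+1).choose k
  have hpascalN : (N + 1).choose k = N.choose (k - 1) + N.choose k := by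
    have hk1 : k - 1 + 1 = k := by omega
    have := Nat.choose_succ_succ' N (k - 1)
    rwa [hk1] at this
  have hCq : (q + 1).choose 2 ≤ (N + 1).choose k := by
    have h2 : 2 * (q + 1).choose 2 ≤ 2 * (N + 1).choose k := by
      rw [hN2' q, hpascalN]
      calc q * (q + 1) = q ^ 2 + q := by ring
        _ ≤ 2 * N.choose k + N.choose (k - 1) := Nat.add_le_add hq2 hqL2
        _ ≤ 2 * (N.choose (k - 1) + N.choose k) := by omega
    omega
  -- step 4 : subtracted terms ≤ (N+1).choose (k-1)
  have hsn : s + n = N := by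
    have h : (n + 1).choose 2 = n.choose 1 + n.choose 2 := Nat.choose_succ_succ' n 1
    rw [Nat.choose_one_right] at h
    omega
  have hsub : s * (s - 1).choose (k - 3) + n * s.choose (k - 3) ≤ (N + 1).choose (k - 1) := by
    have h1 : s * (s - 1).choose (k - 3) + n * s.choose (k - 3) ≤ N * s.choose (k - 3) := by
      calc s * (s - 1).choose (k - 3) + n * s.choose (k - 3)
          ≤ s * s.choose (k - 3) + n * s.choose (k - 3) :=
            Nat.add_le_add_right (Nat.mul_le_mul_left _ (Nat.choose_le_choose _ (by omega))) _
        _ = (s + n) * s.choose (k - 3) := by ring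
        _ = N * s.choose (k - 3) := by rw [hsn]
    have h2 : N * s.choose (k - 3) ≤ (N + 1).choose (k - 1) := by
      have hvan := Nat.add_choose_eq (n + 1) s (k - 1)
      have hmem : ((2 : ℕ), k - 3) ∈ Finset.HasAntidiagonal.antidiagonal (k - 1) := by
        rw [Finset.HasAntidiagonal.mem_antidiagonal]
        omega
      have hterm := Finset.single_le_sum
        (f := fun ij : ℕ × ℕ => Nat.choose (n + 1) ij.1 * Nat.choose s ij.2)
        (fun i _ => Nat.zero_le _) hmem
      have heq : n + 1 + s = N + 1 := by omega
      rw [heq] at hvan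
      calc N * s.choose (k - 3) = (n + 1).choose 2 * s.choose (k - 3) := by rw [hNdef]
        _ ≤ (N + 1).choose (k - 1) := by rw [hvan]; exact hterm
    exact h1.trans h2
  -- step 5 : combine
  have hpascal2 : (N + 2).choose k = (N + 1).choose (k - 1) + (N + 1).choose k := by
    have hk1 : k - 1 + 1 = k := by omega
    have := Nat.choose_succ_succ' (N + 1) (k - 1)
    rwa [hk1] at this
  have htotal : m + (s * (s - 1).choose (k - 3) + n * s.choose (k - 3)) ≤ (N + k - 1).choose k := by
    calc m + (s * (s - 1).choose (k - 3) + n * s.choose (k - 3))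
        ≤ (N + 1).choose k + (N + 1).choose (k - 1) := Nat.add_le_add (hm.trans hCq) hsub
      _ = (N + 2).choose k := by omega
      _ ≤ (N + k - 1).choose k := Nat.choose_le_choose k (by omega)
  omega


/-- half Cauchy-Binet : expansion of `det (A * C)` over row-selections of `C`. -/
private lemma half_cb {k : ℕ} {I : Type*} [Fintype I] [DecidableEq I]
    (A : Matrix (Fin k) I ℝ) (C : Matrix I (Fin k) ℝ) :
    (A * C).det = ∑ p : Fin k → I, (∏ i, A i (p i)) * (C.submatrix p id).det := by
  have h1 : ∀ σ : Perm (Fin k), (∏ i, (A * C) i (σ i))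
      = ∑ p : Fin k → I, (∏ i, A i (p i)) * ∏ i, C (p i) (σ i) := by
    intro σ
    simp_rw [Matrix.mul_apply]
    rw [Fintype.prod_sum (fun i x => A i x * C x (σ i))]
    exact Finset.sum_congr rfl fun p _ => by rw [Finset.prod_mul_distrib]
  rw [← Matrix.det_transpose (A * C), Matrix.det_apply']
  simp_rw [Matrix.transpose_apply, h1, Finset.mul_sum]
  rw [Finset.sum_comm]
  refine Finset.sum_congr rfl fun p _ => ?_
  rw [← Matrix.det_transpose (C.submatrix p id), Matrix.det_apply', Finset.mul_sum]
  refine Finset.sum_congr rfl fun σ _ => ?_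
  simp only [Matrix.transpose_apply, Matrix.submatrix_apply, id_eq, Units.smul_def, zsmul_eq_mul]
  ring


/-- every injective map `Fin k → Fin n` factors as a monotone embedding of its image
composed with a permutation. -/
private lemma factor_mono {k n : ℕ} {p : Fin k → Fin n} (hp : Function.Injective p) :
    ∃ (s : Finset (Fin n)) (hs : s.card = k) (σ : Equiv.Perm (Fin k)),
      p = (s.orderEmbOfFin hs) ∘ σ := by
  classical
  set s : Finset (Fin n) := Finset.univ.image p with hsdef
  have hs : s.card = k := by
    rw [hsdef, Finset.card_image_of_injective _ hp, Finset.card_univ, Fintype.card_fin]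
  have hmem : ∀ i, p i ∈ s := fun i => Finset.mem_image_of_mem _ (Finset.mem_univ i)
  let e1 : Fin k → {x // x ∈ s} := fun i => ⟨p i, hmem i⟩
  have he1 : Function.Injective e1 := fun a b hab => hp (congrArg Subtype.val hab)
  have hbij : Function.Bijective e1 :=
    (Fintype.bijective_iff_injective_and_card e1).2 ⟨he1, by simp [Fintype.card_coe, hs]⟩
  let E : Fin k ≃ {x // x ∈ s} := Equiv.ofBijective e1 hbij
  refine ⟨s, hs, E.trans (s.orderIsoOfFin hs).toEquiv.symm, ?_⟩
  funext i
  have h1 : (s.orderIsoOfFin hs) ((s.orderIsoOfFin hs).symm (E i)) = E i :=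
    (s.orderIsoOfFin hs).apply_symm_apply _
  have h2 : ((s.orderIsoOfFin hs) ((s.orderIsoOfFin hs).symm (E i)) : Fin n) = p i := by
    rw [h1]; rfl
  calc p i = ((s.orderIsoOfFin hs) ((s.orderIsoOfFin hs).symm (E i)) : Fin n) := h2.symm
    _ = (s.orderEmbOfFin hs) ((s.orderIsoOfFin hs).symm (E i)) :=
        Finset.coe_orderIsoOfFin_apply s hs _
    _ = ((s.orderEmbOfFin hs) ∘ (E.trans (s.orderIsoOfFin hs).toEquiv.symm)) i := rfl

private def minorFun {n m : ℕ} (k : ℕ) (Q : Fin m → Matrix (Fin n) (Fin n) ℝ)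
    (hQ : ∀ j, (Q j)ᵀ = Q j) :
    Sym2 {s : Finset (Fin n) // s.card = k} → (Fin m → ℝ) :=
  Sym2.lift ⟨fun R R' => fun j =>
      ((Q j).submatrix (R.1.orderEmbOfFin R.2) (R'.1.orderEmbOfFin R'.2)).det,
    fun R R' => by
      funext j
      dsimp only
      rw [← Matrix.det_transpose ((Q j).submatrix _ _), Matrix.transpose_submatrix, hQ j]⟩

private lemma mem_span_minors {n k m : ℕ} (Q : Fin m → Matrix (Fin n) (Fin n) ℝ)
    (hQ : ∀ j, (Q j)ᵀ = Q j) (p p' : Fin k → Fin n) :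
    (fun j => ((Q j).submatrix p p').det) ∈
      Submodule.span ℝ (Set.range (minorFun k Q hQ)) := by
  classical
  by_cases hp : Function.Injective p
  · by_cases hp' : Function.Injective p'
    · obtain ⟨s, hs, σ, rfl⟩ := factor_mono hp
      obtain ⟨s', hs', σ', rfl⟩ := factor_mono hp'
      have key : (fun j => ((Q j).submatrix (⇑(s.orderEmbOfFin hs) ∘ ⇑σ) (⇑(s'.orderEmbOfFin hs') ∘ ⇑σ')).det)
          = (((Equiv.Perm.sign σ : ℤ) : ℝ) * ((Equiv.Perm.sign σ' : ℤ) : ℝ)) •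
              minorFun k Q hQ (s(⟨s, hs⟩, ⟨s', hs'⟩)) := by
        funext j
        have h1 : (Q j).submatrix (⇑(s.orderEmbOfFin hs) ∘ ⇑σ) (⇑(s'.orderEmbOfFin hs') ∘ ⇑σ')
            = (((Q j).submatrix (⇑(s.orderEmbOfFin hs)) (⇑(s'.orderEmbOfFin hs'))).submatrix id ⇑σ').submatrix ⇑σ id := by
          rw [Matrix.submatrix_submatrix, Matrix.submatrix_submatrix]
          simp
        rw [h1, Matrix.det_permute, Matrix.det_permute']
        simp only [minorFun, Sym2.lift_mk, Pi.smul_apply, smul_eq_mul]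
        ring
      rw [key]
      exact Submodule.smul_mem _ _ (Submodule.subset_span ⟨_, rfl⟩)
    · rw [Function.not_injective_iff] at hp'
      obtain ⟨a, b, hab, hne⟩ := hp'
      have hzero : (fun j => ((Q j).submatrix p p').det) = 0 := by
        funext j
        exact Matrix.det_zero_of_column_eq hne (fun x => by simp [Matrix.submatrix_apply, hab])
      rw [hzero]; exact Submodule.zero_mem _
  · rw [Function.not_injective_iff] at hp
    obtain ⟨a, b, hab, hne⟩ := hp
    have hzero : (fun j => ((Q j).submatrix p p').det) = 0 := by
      funext j
      refine Matrix.det_zero_of_row_eq hne ?_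
      funext x
      simp [Matrix.submatrix_apply, hab]
    rw [hzero]; exact Submodule.zero_mem _



end AuxStmt6

/-- upper bound for equiangular `k`-subspaces (`3 ≤ k ≤ n`) with respect to an
angle distance. The family is given by orthonormal basis matrices `U i` spanning pairwise
distinct subspaces (distinct orthogonal projections `U i * (U i)ᵀ`); equiangularity with
common angle `α ∈ (0, π/2]` means that `cos α` is a singular value of `(U i)ᵀ * U j` for all
`i ≠ j`, i.e. `det((U i)ᵀ U j (U j)ᵀ U i − cos²α · I) = 0`. Writing `M s = C(s,2)`, the bound
is `C(M_{n+1} + k − 1, k) − M_n · C(M_n − 1, k − 3) − n · C(M_n, k − 3)`. -/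
theorem stmt6 (n k m : ℕ) (hk : 3 ≤ k) (hkn : k ≤ n)
    (U : Fin m → Matrix (Fin n) (Fin k) ℝ)
    (horth : ∀ i, (U i)ᵀ * U i = 1)
    (hinj : Function.Injective fun i => U i * (U i)ᵀ)
    (α : ℝ) (hα : α ∈ Set.Ioc 0 (π / 2))
    (hang : ∀ i j, i ≠ j →
      ((U i)ᵀ * U j * (U j)ᵀ * U i - (Real.cos α) ^ 2 • (1 : Matrix (Fin k) (Fin k) ℝ)).det
        = 0) :
    m ≤ ((n + 1).choose 2 + k - 1).choose k
        - n.choose 2 * (n.choose 2 - 1).choose (k - 3)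
        - n * (n.choose 2).choose (k - 3) := by

  classical
  set c : ℝ := Real.cos α ^ 2 with hcdef
  have hsin : 0 < Real.sin α :=
    Real.sin_pos_of_pos_of_lt_pi hα.1 (lt_of_le_of_lt hα.2 (by linarith [Real.pi_pos]))
  have hc1 : 1 - c = Real.sin α ^ 2 := by
    have := Real.sin_sq_add_cos_sq α
    rw [hcdef]; linarith
  have hκpos : (0:ℝ) < (1 - c) ^ k := by rw [hc1]; positivity
  have hκ : ((1:ℝ) - c) ^ k ≠ 0 := ne_of_gt hκpos
  set Q : Fin m → Matrix (Fin n) (Fin n) ℝ := fun j => U j * (U j)ᵀ - c • 1 with hQdef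
  have hQsymm : ∀ j, (Q j)ᵀ = Q j := by
    intro j
    rw [hQdef]
    simp only [Matrix.transpose_sub, Matrix.transpose_smul, Matrix.transpose_one,
      Matrix.transpose_mul, Matrix.transpose_transpose]
  set v : Fin m → Fin m → ℝ := fun i j => ((U i)ᵀ * Q j * U i).det with hvdef
  have hkey : ∀ i j, (U i)ᵀ * Q j * U i
      = (U i)ᵀ * U j * (U j)ᵀ * U i - c • (1 : Matrix (Fin k) (Fin k) ℝ) := by
    intro i j
    rw [hQdef]
    simp only [Matrix.mul_sub, Matrix.sub_mul]
    congr 1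
    · first
      | rfl
      | rw [← Matrix.mul_assoc, ← Matrix.mul_assoc]
      | simp [Matrix.mul_assoc]
    · rw [Matrix.mul_smul, Matrix.smul_mul, Matrix.mul_one, horth i]
  have hvdiag : ∀ i, v i i = (1 - c) ^ k := by
    intro i
    show ((U i)ᵀ * Q i * U i).det = (1 - c) ^ k
    rw [hkey i i]
    have h1 : (U i)ᵀ * U i * (U i)ᵀ * U i = 1 := by
      rw [horth i, Matrix.one_mul, horth i]
    rw [h1]
    have h2 : (1 : Matrix (Fin k) (Fin k) ℝ) - c • 1 = (1 - c) • 1 := by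
      rw [sub_smul, one_smul]
    rw [h2, Matrix.det_smul, Matrix.det_one, mul_one, Fintype.card_fin]
  have hvoff : ∀ i j, i ≠ j → v i j = 0 := by
    intro i j hij
    show ((U i)ᵀ * Q j * U i).det = 0
    rw [hkey i j]
    exact hang i j hij
  -- spanning family of symmetric minors
  set w := minorFun k Q hQsymm with hwdef
  have hspan : ∀ i, v i ∈ Submodule.span ℝ (Set.range w) := by
    intro i
    have hvexp : v i = ∑ p : Fin k → Fin n, ∑ p' : Fin k → Fin n,
        ((∏ a, (U i)ᵀ a (p a)) * ∏ b, (U i)ᵀ b (p' b)) •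
          (fun j => ((Q j).submatrix p p').det) := by
      funext j
      have e1 : v i j = ((U i)ᵀ * (Q j * U i)).det := by
        show ((U i)ᵀ * Q j * U i).det = _
        rw [Matrix.mul_assoc]
      rw [e1, half_cb]
      have e2 : ∀ p : Fin k → Fin n, (Q j * U i).submatrix p id
          = (Q j).submatrix p id * U i := by
        intro p
        ext a b
        simp [Matrix.mul_apply, Matrix.submatrix_apply]
      have e3 : ∀ p : Fin k → Fin n, ((Q j).submatrix p id * U i).det
          = ∑ p' : Fin k → Fin n, (∏ b, (U i)ᵀ b (p' b)) * ((Q j).submatrix p p').det := by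
        intro p
        rw [← Matrix.det_transpose ((Q j).submatrix p id * U i), Matrix.transpose_mul, half_cb]
        refine Finset.sum_congr rfl fun p' _ => ?_
        congr 1
        have e4 : (((Q j).submatrix p id)ᵀ).submatrix p' id = ((Q j).submatrix p p')ᵀ := by
          ext a b
          simp [Matrix.submatrix_apply, Matrix.transpose_apply]
        rw [e4, Matrix.det_transpose]
      simp only [Finset.sum_apply, Pi.smul_apply, smul_eq_mul]
      rw [Finset.sum_congr rfl fun p _ => by rw [e2, e3]]
      simp only [Finset.mul_sum]
      refine Finset.sum_congr rfl fun p _ => Finset.sum_congr rfl fun p' _ => by ring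
    rw [hvexp]
    exact Submodule.sum_mem _ fun p _ => Submodule.sum_mem _ fun p' _ =>
      Submodule.smul_mem _ _ (mem_span_minors Q hQsymm p p')
  have hsingle : ∀ i, Pi.single i (1:ℝ) ∈ Submodule.span ℝ (Set.range w) := by
    intro i
    have hps : Pi.single i (1:ℝ) = ((1 - c) ^ k)⁻¹ • v i := by
      funext j
      rcases eq_or_ne j i with rfl | hji
      · rw [Pi.single_eq_same, Pi.smul_apply, hvdiag j, smul_eq_mul, inv_mul_cancel₀ hκ]
      · rw [Pi.single_eq_of_ne hji, Pi.smul_apply, hvoff i j (Ne.symm hji), smul_zero]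
    rw [hps]
    exact Submodule.smul_mem _ _ (hspan i)
  have htop : Submodule.span ℝ (Set.range w) = ⊤ := by
    rw [eq_top_iff, ← (Pi.basisFun ℝ (Fin m)).span_eq]
    refine Submodule.span_le.2 ?_
    rintro x ⟨i, rfl⟩
    rw [Pi.basisFun_apply]
    exact hsingle i
  -- cardinality bound
  have hm : m ≤ (n.choose k + 1).choose 2 := by
    have hcard : Fintype.card (Sym2 {s : Finset (Fin n) // s.card = k})
        = (n.choose k + 1).choose 2 := by
      rw [Sym2.card, Fintype.card_finset_len, Fintype.card_fin]
    calc m = Module.finrank ℝ (Fin m → ℝ) := by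
          rw [Module.finrank_pi, Fintype.card_fin]
      _ = Module.finrank ℝ (⊤ : Submodule ℝ (Fin m → ℝ)) := (finrank_top ℝ _).symm
      _ = Module.finrank ℝ (Submodule.span ℝ (Set.range w)) := by rw [htop]
      _ ≤ (Set.range w).toFinset.card := finrank_span_le_card _
      _ ≤ Fintype.card (Sym2 {s : Finset (Fin n) // s.card = k}) := by
          rw [Set.toFinset_range]
          exact (Finset.card_image_le).trans (le_of_eq (Finset.card_univ))
      _ = (n.choose k + 1).choose 2 := hcard
  exact numeric_bound n k m hk hkn hm
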